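/- (Theorem 4, generalized LDGM under additive noise) Let E ⊆ ℝ^n be a finite nonempty set of nonnegative vectors, P = conv(E), l a positive integer, and enumerate 𝓔 = {(1/l)·x : x ∈ Frontier(E)} as e_1, …, e_m where m = |Frontier(E)|. Let γ be a positive integer dividing l, let 0 < β ≤ 1, and let f : ℝ^n → ℝ satisfy f(0) = 0, be monotone on the nonnegative orthant, and have DR-submodularity ratio at least β. Assume L ≥ 0 satisfies |f(x) − f(y)| ≤ L·‖x − y‖ for all x, y ∈ Frontier(P); assume D ≥ 0 satisfies ‖x‖ ≤ D for all x ∈ P; and assume x* ∈ Frontier(P) satisfies f(x*) ≥ f(y) for all y ∈ P. Let reals ε_{t,i} be given for 0 ≤ t < l and 1 ≤ i ≤ m. Define x_0 = 0 and, for each 0 ≤ t < l, x_{t+1} = x_t + e_{i*_t} where i*_t ∈ {1, …, m} satisfies f(x_t + γ·e_{i*_t}) + ε_{t,i*_t} ≥ f(x_t + γ·e_i) + ε_{t,i} for all i. Let i_1, …, i_{l/γ} ∈ {1, …, m} be indices such that v*_γ = Σ_{j=1}^{l/γ} γ·e_{i_j} satisfies f(v*_γ) ≥ f(w) for every w that is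 a sum of l/γ elements (with repetition) of {γ·e_1, …, γ·e_m}. Then f(x_l) ≥ (1 − e^{−β²})·f(x*) − (1 − e^{−β²})·m·D·L·γ/l − (β/l)·Σ_{t=0}^{l−1} (1 − β²/l)^{l−1−t}·Σ_{j=1}^{l/γ} (ε_{t,i*_t} − ε_{t,i_j}). -/

import Mathlib

/-- The set of maximal elements of `S` for the coordinatewise partial order. -/
def maxFrontier {n : ℕ} (S : Set (Fin n → ℝ)) : Set (Fin n → ℝ) :=
  {x | x ∈ S ∧ ¬ ∃ y ∈ S, x ≤ y ∧ x ≠ y}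

/-- Euclidean norm on `Fin n → ℝ`. -/
noncomputable def euclidSqrtNorm {n : ℕ} (x : Fin n → ℝ) : ℝ :=
  Real.sqrt (∑ i, (x i) ^ 2)

set_option maxHeartbeats 1000000

open Finset

private lemma sum_single_eq {n : ℕ} (v : Fin n → ℝ) :
    ∑ i, v i • (Pi.single i 1 : Fin n → ℝ) = v := by
  funext j
  simp [Finset.sum_apply, Pi.single_apply]

private lemma single_nonneg' {n : ℕ} (i : Fin n) : (0:Fin n → ℝ) ≤ Pi.single i 1 := by
  intro j
  by_cases h : j = i <;> simp [Pi.single_apply, h]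

private lemma dr_vec {n : ℕ} {β : ℝ} {f : (Fin n → ℝ) → ℝ}
    (hDR : ∀ x y : Fin n → ℝ, 0 ≤ x → x ≤ y → ∀ k : ℝ, 0 ≤ k → ∀ i : Fin n,
      f (x + k • (Pi.single i 1 : Fin n → ℝ)) - f x ≥ β * (f (y + k • (Pi.single i 1 : Fin n → ℝ)) - f y))
    {x y v : Fin n → ℝ} (hx : 0 ≤ x) (hxy : x ≤ y) (hv : 0 ≤ v) :
    β * (f (y + v) - f y) ≤ f (x + v) - f x := by
  have key : ∀ s : Finset (Fin n),
      β * (f (y + ∑ i ∈ s, v i • (Pi.single i 1 : Fin n → ℝ)) - f y)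
        ≤ f (x + ∑ i ∈ s, v i • (Pi.single i 1 : Fin n → ℝ)) - f x := by
    intro s
    induction s using Finset.induction_on with
    | empty => simp
    | @insert a s ha ih =>
        set u : Fin n → ℝ := ∑ i ∈ s, v i • (Pi.single i 1 : Fin n → ℝ) with hu
        have hu0 : 0 ≤ u := by
          apply Finset.sum_nonneg
          intro i _
          exact smul_nonneg (hv i) (single_nonneg' i)
        have hxu : 0 ≤ x + u := add_nonneg hx hu0
        have hxyu : x + u ≤ y + u := add_le_add hxy le_rfl
        have h1 := hDR (x + u) (y + u) hxu hxyu (v a) (hv a) a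
        rw [Finset.sum_insert ha]
        have e1 : x + (v a • (Pi.single a 1 : Fin n → ℝ) + u)
            = (x + u) + v a • (Pi.single a 1 : Fin n → ℝ) := by abel
        have e2 : y + (v a • (Pi.single a 1 : Fin n → ℝ) + u)
            = (y + u) + v a • (Pi.single a 1 : Fin n → ℝ) := by abel
        rw [e1, e2]
        have := ih
        nlinarith [this, h1]
  have h := key Finset.univ
  rwa [sum_single_eq] at h

private lemma dr_sum {n : ℕ} {β : ℝ} {f : (Fin n → ℝ) → ℝ}
    (hDR : ∀ x y : Fin n → ℝ, 0 ≤ x → x ≤ y → ∀ k : ℝ, 0 ≤ k → ∀ i : Fin n,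
      f (x + k • (Pi.single i 1 : Fin n → ℝ)) - f x ≥ β * (f (y + k • (Pi.single i 1 : Fin n → ℝ)) - f y))
    {N : ℕ} {x : Fin n → ℝ} (hx : 0 ≤ x) {w : Fin N → Fin n → ℝ} (hw : ∀ j, 0 ≤ w j) :
    β * (f (x + ∑ j, w j) - f x) ≤ ∑ j, (f (x + w j) - f x) := by
  have key : ∀ s : Finset (Fin N),
      β * (f (x + ∑ j ∈ s, w j) - f x) ≤ ∑ j ∈ s, (f (x + w j) - f x) := by
    intro s
    induction s using Finset.induction_on with
    | empty => simp
    | @insert a s ha ih =>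
        set u : Fin n → ℝ := ∑ j ∈ s, w j with hu
        have hu0 : 0 ≤ u := Finset.sum_nonneg fun j _ => hw j
        have h1 := dr_vec hDR hx (le_add_of_nonneg_right hu0) (hw a)
        rw [Finset.sum_insert ha, Finset.sum_insert ha]
        have e1 : x + (w a + u) = (x + u) + w a := by abel
        rw [e1]
        linarith [ih, h1]
  simpa using key Finset.univ


private lemma round_weights {m : ℕ} (N : ℕ) (hN : 0 < N) (lam : Fin m → ℝ)
    (h0 : ∀ i, 0 ≤ lam i) (h1 : ∑ i, lam i = 1) :
    ∃ c : Fin m → ℕ, (∑ i, c i = N) ∧ (∀ i, |(c i : ℝ) - lam i * N| ≤ 1) ∧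
      (∀ i, 0 < c i → 0 < lam i) := by
  set a : Fin m → ℕ := fun i => ⌊lam i * N⌋₊ with ha
  have hle : ∀ i, (a i : ℝ) ≤ lam i * N := fun i =>
    Nat.floor_le (mul_nonneg (h0 i) (Nat.cast_nonneg N))
  have hlt : ∀ i, lam i * N < a i + 1 := fun i => Nat.lt_floor_add_one _
  have hsumr : (∑ i, (a i : ℝ)) ≤ N := by
    calc (∑ i, (a i : ℝ)) ≤ ∑ i, lam i * N := Finset.sum_le_sum fun i _ => hle i
    _ = (∑ i, lam i) * N := by rw [Finset.sum_mul]
    _ = N := by rw [h1, one_mul]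
  have hA : ∑ i, a i ≤ N := by exact_mod_cast (by push_cast; exact hsumr : ((∑ i, a i : ℕ) : ℝ) ≤ (N:ℝ))
  set r : ℕ := N - ∑ i, a i with hr
  set T₀ : Finset (Fin m) := univ.filter fun i => (a i : ℝ) < lam i * N with hT₀
  have hrr : (r : ℝ) = ∑ i ∈ T₀, (lam i * N - a i) := by
    have e1 : (r : ℝ) = (N : ℝ) - ∑ i, (a i : ℝ) := by
      rw [hr]; push_cast [Nat.cast_sub hA]; ring
    have e2 : (∑ i ∈ T₀, (lam i * N - a i)) = ∑ i, (lam i * N - (a i : ℝ)) := by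
      apply Finset.sum_subset (Finset.filter_subset _ _)
      intro i _ hni
      simp only [Finset.mem_filter, Finset.mem_univ, true_and, not_lt] at hni
      linarith [hle i]
    rw [e1, e2, Finset.sum_sub_distrib, ← Finset.sum_mul, h1, one_mul]
  have hrcard : r ≤ T₀.card := by
    rcases Nat.eq_zero_or_pos r with h | h
    · simp [h]
    · have hne : T₀.Nonempty := by
        by_contra hc
        rw [Finset.not_nonempty_iff_eq_empty] at hc
        rw [hc, Finset.sum_empty] at hrr
        exact absurd (Nat.cast_eq_zero.mp hrr) (Nat.pos_iff_ne_zero.mp h)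
      have : (r : ℝ) < T₀.card := by
        rw [hrr]
        calc ∑ i ∈ T₀, (lam i * N - (a i : ℝ)) < ∑ _i ∈ T₀, (1:ℝ) :=
          Finset.sum_lt_sum_of_nonempty hne fun i _ => by linarith [hlt i]
        _ = T₀.card := by simp
      exact le_of_lt (by exact_mod_cast this)
  obtain ⟨T, hTsub, hTcard⟩ := Finset.exists_subset_card_eq hrcard
  refine ⟨fun i => a i + (if i ∈ T then 1 else 0), ?_, ?_, ?_⟩
  · rw [Finset.sum_add_distrib]
    have : (∑ i, if i ∈ T then 1 else 0) = T.card := by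
      rw [Finset.sum_ite_mem, Finset.univ_inter, Finset.card_eq_sum_ones]
    rw [this, hTcard]
    omega
  · intro i
    by_cases h : i ∈ T
    · have hiT₀ : i ∈ T₀ := hTsub h
      rw [hT₀, Finset.mem_filter] at hiT₀
      simp only [h, if_true]
      rw [abs_le]
      push_cast
      constructor <;> nlinarith [hle i, hlt i]
    · simp only [h, if_false]
      rw [abs_le]
      push_cast
      constructor <;> nlinarith [hle i, hlt i]
  · intro i hi
    by_cases h : i ∈ T
    · have hiT₀ : i ∈ T₀ := hTsub h
      rw [hT₀, Finset.mem_filter] at hiT₀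
      have := hiT₀.2
      have hN' : (0:ℝ) < N := by exact_mod_cast hN
      nlinarith [Nat.cast_nonneg (α := ℝ) (a i)]
    · simp only [h, if_false, add_zero] at hi
      have : (1:ℝ) ≤ (a i : ℝ) := by exact_mod_cast hi
      have hN' : (0:ℝ) < N := by exact_mod_cast hN
      nlinarith [hle i]



private lemma euclidSqrtNorm_eq_norm {n : ℕ} (x : Fin n → ℝ) :
    euclidSqrtNorm x = ‖(WithLp.toLp 2 x : EuclideanSpace ℝ (Fin n))‖ := by
  rw [EuclideanSpace.norm_eq]
  unfold euclidSqrtNorm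
  congr 1
  apply Finset.sum_congr rfl
  intro i _
  rw [Real.norm_eq_abs, sq_abs]

private lemma euclidSqrtNorm_sum_le {m n : ℕ} (v : Fin m → Fin n → ℝ) :
    euclidSqrtNorm (∑ i, v i) ≤ ∑ i, euclidSqrtNorm (v i) := by
  have e1 : (WithLp.toLp 2 (∑ i, v i) : EuclideanSpace ℝ (Fin n))
      = ∑ i, (WithLp.toLp 2 (v i) : EuclideanSpace ℝ (Fin n)) := WithLp.toLp_sum _ _ _ _
  rw [euclidSqrtNorm_eq_norm, e1]
  calc ‖∑ i, (WithLp.toLp 2 (v i) : EuclideanSpace ℝ (Fin n))‖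
      ≤ ∑ i, ‖(WithLp.toLp 2 (v i) : EuclideanSpace ℝ (Fin n))‖ := norm_sum_le _ _
    _ = ∑ i, euclidSqrtNorm (v i) := by
        exact Finset.sum_congr rfl fun i _ => (euclidSqrtNorm_eq_norm (v i)).symm

private lemma euclidSqrtNorm_smul' {n : ℕ} (c : ℝ) (x : Fin n → ℝ) :
    euclidSqrtNorm (c • x) = |c| * euclidSqrtNorm x := by
  have e1 : (WithLp.toLp 2 (c • x) : EuclideanSpace ℝ (Fin n))
      = c • (WithLp.toLp 2 x : EuclideanSpace ℝ (Fin n)) := rfl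
  rw [euclidSqrtNorm_eq_norm, e1, norm_smul, Real.norm_eq_abs, euclidSqrtNorm_eq_norm]

private lemma frontier_transfer {n m : ℕ} {E : Set (Fin n → ℝ)} {p : Fin m → Fin n → ℝ}
    (hp : ∀ i, p i ∈ E) {lam mu : Fin m → ℝ}
    (hl0 : ∀ i, 0 ≤ lam i) (hm0 : ∀ i, 0 ≤ mu i)
    (hl1 : ∑ i, lam i = 1) (hm1 : ∑ i, mu i = 1)
    (hsupp : ∀ i, 0 < mu i → 0 < lam i)
    (hx : (∑ i, lam i • p i) ∈ maxFrontier (convexHull ℝ E)) :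
    (∑ i, mu i • p i) ∈ maxFrontier (convexHull ℝ E) := by
  have hK : Convex ℝ (convexHull ℝ E) := convex_convexHull ℝ E
  have hpK : ∀ i, p i ∈ convexHull ℝ E := fun i => subset_convexHull ℝ E (hp i)
  set z : Fin n → ℝ := ∑ i, mu i • p i with hz
  have hzK : z ∈ convexHull ℝ E :=
    hK.sum_mem (fun i _ => hm0 i) hm1 (fun i _ => hpK i)
  refine ⟨hzK, ?_⟩
  rintro ⟨u, huK, hzu, hzne⟩
  set S : Finset (Fin m) := univ.filter fun i => 0 < mu i with hS
  have hSne : S.Nonempty := by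
    by_contra hc
    rw [Finset.not_nonempty_iff_eq_empty] at hc
    have : ∀ i, mu i = 0 := by
      intro i
      by_contra hmi
      have : i ∈ S := by
        rw [hS, Finset.mem_filter]
        exact ⟨Finset.mem_univ i, lt_of_le_of_ne (hm0 i) (Ne.symm hmi)⟩
      rw [hc] at this
      exact absurd this (Finset.notMem_empty i)
    rw [Finset.sum_congr rfl fun i _ => this i, Finset.sum_const, smul_zero] at hm1
    norm_num at hm1
  set ε : ℝ := min (1/2) (S.inf' hSne fun i => lam i / mu i) with hε
  have hεpos : 0 < ε := by
    rw [hε]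
    apply lt_min (by norm_num)
    rw [Finset.lt_inf'_iff]
    intro i hi
    rw [hS, Finset.mem_filter] at hi
    exact div_pos (hsupp i hi.2) hi.2
  have hε1 : ε ≤ 1/2 := min_le_left _ _
  have hεμ : ∀ i, ε * mu i ≤ lam i := by
    intro i
    rcases lt_or_ge 0 (mu i) with h | h
    · have hiS : i ∈ S := by rw [hS, Finset.mem_filter]; exact ⟨Finset.mem_univ i, h⟩
      have : ε ≤ lam i / mu i := le_trans (min_le_right _ _) (by exact Finset.inf'_le _ hiS)
      calc ε * mu i ≤ (lam i / mu i) * mu i := by nlinarith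
        _ = lam i := by field_simp
    · have : mu i = 0 := le_antisymm h (hm0 i)
      rw [this, mul_zero]
      exact hl0 i
  have h1ε : (0:ℝ) < 1 - ε := by linarith
  set y : Fin n → ℝ := ∑ i, ((lam i - ε * mu i)/(1-ε)) • p i with hy
  have hyK : y ∈ convexHull ℝ E := by
    apply hK.sum_mem
    · intro i _
      exact div_nonneg (by linarith [hεμ i]) h1ε.le
    · rw [← Finset.sum_div, Finset.sum_sub_distrib, ← Finset.mul_sum, hl1, hm1, mul_one]
      field_simp
    · exact fun i _ => hpK i
  set x' : Fin n → ℝ := (1-ε) • y + ε • u with hx'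
  have hx'K : x' ∈ convexHull ℝ E := hK hyK huK h1ε.le hεpos.le (by ring)
  have hx'eq : x' = (∑ i, lam i • p i) + ε • (u - z) := by
    rw [hx', hy, Finset.smul_sum]
    have : ∀ i, (1-ε) • (((lam i - ε * mu i)/(1-ε)) • p i) = lam i • p i - ε • (mu i • p i) := by
      intro i
      rw [smul_smul, mul_div_cancel₀ _ h1ε.ne', sub_smul, smul_smul]
    rw [Finset.sum_congr rfl fun i _ => this i, Finset.sum_sub_distrib, ← Finset.smul_sum,
      smul_sub, ← hz]
    abel
  have hle' : (∑ i, lam i • p i) ≤ x' := by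
    rw [hx'eq]
    apply le_add_of_nonneg_right
    exact smul_nonneg hεpos.le (sub_nonneg.mpr hzu)
  have hne' : (∑ i, lam i • p i) ≠ x' := by
    intro hcon
    rw [hx'eq, left_eq_add] at hcon
    have := smul_eq_zero.mp hcon
    rcases this with h | h
    · exact absurd h hεpos.ne'
    · exact hzne (by rw [sub_eq_zero] at h; exact h.symm)
  exact hx.2 ⟨x', hx'K, hle', hne'⟩


/-- Theorem 4: guarantee of generalized LDGM under additive noise. -/
theorem stmt_13 {n : ℕ} (E : Set (Fin n → ℝ)) (hfin : E.Finite) (hne : E.Nonempty)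
    (hpos : ∀ v ∈ E, 0 ≤ v)
    (l : ℕ) (hl : 0 < l)
    (m : ℕ) (hm : m = (maxFrontier E).ncard)
    (e : Fin m → Fin n → ℝ) (heinj : Function.Injective e)
    (herange : Set.range e = (fun v : Fin n → ℝ => (l : ℝ)⁻¹ • v) '' maxFrontier E)
    (γ : ℕ) (hγ : 0 < γ) (hdvd : γ ∣ l)
    (β : ℝ) (hβ0 : 0 < β) (hβ1 : β ≤ 1)
    (f : (Fin n → ℝ) → ℝ) (hf0 : f 0 = 0)
    (hmono : ∀ x y : Fin n → ℝ, 0 ≤ x → x ≤ y → f x ≤ f y)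
    (hDR : ∀ x y : Fin n → ℝ, 0 ≤ x → x ≤ y → ∀ k : ℝ, 0 ≤ k → ∀ i : Fin n,
      f (x + k • (Pi.single i 1 : Fin n → ℝ)) - f x ≥ β * (f (y + k • (Pi.single i 1 : Fin n → ℝ)) - f y))
    (L : ℝ) (hL : 0 ≤ L)
    (hLip : ∀ x ∈ maxFrontier (convexHull ℝ E), ∀ y ∈ maxFrontier (convexHull ℝ E),
      |f x - f y| ≤ L * euclidSqrtNorm (x - y))
    (D : ℝ) (hD : 0 ≤ D) (hDb : ∀ x ∈ convexHull ℝ E, euclidSqrtNorm x ≤ D)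
    (xstar : Fin n → ℝ) (hxs : xstar ∈ maxFrontier (convexHull ℝ E))
    (hopt : ∀ y ∈ convexHull ℝ E, f y ≤ f xstar)
    (eps : ℕ → Fin m → ℝ)
    (x : ℕ → Fin n → ℝ) (hx0 : x 0 = 0)
    (istar : ℕ → Fin m)
    (hstep : ∀ t < l,
      (∀ i : Fin m, f (x t + (γ : ℝ) • e i) + eps t i
        ≤ f (x t + (γ : ℝ) • e (istar t)) + eps t (istar t)) ∧
      x (t + 1) = x t + e (istar t))
    (ii : Fin (l / γ) → Fin m)
    (hii : ∀ w : Fin (l / γ) → Fin m,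
      f (∑ j, (γ : ℝ) • e (w j)) ≤ f (∑ j, (γ : ℝ) • e (ii j))) :
    f (x l) ≥ (1 - Real.exp (-β ^ 2)) * f xstar
      - (1 - Real.exp (-β ^ 2)) * m * D * L * γ / l
      - (β / l) * ∑ t ∈ Finset.range l, (1 - β ^ 2 / l) ^ (l - 1 - t) *
          ∑ j, (eps t (istar t) - eps t (ii j)) := by
  have hl' : (0:ℝ) < l := by exact_mod_cast hl
  have hNγ : l / γ * γ = l := Nat.div_mul_cancel hdvd
  have hNpos : 0 < l / γ := Nat.div_pos (Nat.le_of_dvd hl hdvd) hγ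
  have he0 : ∀ i : Fin m, (0 : Fin n → ℝ) ≤ e i := by
    intro i
    have hmem : e i ∈ Set.range e := ⟨i, rfl⟩
    rw [herange] at hmem
    obtain ⟨v, hv, hvi⟩ := hmem
    rw [← hvi]
    exact smul_nonneg (inv_nonneg.mpr (Nat.cast_nonneg l)) (hpos v hv.1)
  have hlei : ∀ i : Fin m, (l:ℝ) • e i ∈ maxFrontier E := by
    intro i
    have hmem : e i ∈ Set.range e := ⟨i, rfl⟩
    rw [herange] at hmem
    obtain ⟨v, hv, hvi⟩ := hmem
    rw [← hvi, smul_smul, mul_inv_cancel₀ (by exact_mod_cast hl.ne' : (l:ℝ) ≠ 0), one_smul]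
    exact hv
  have fnn : ∀ v : Fin n → ℝ, 0 ≤ v → 0 ≤ f v := by
    intro v hv
    have := hmono 0 v le_rfl hv
    rwa [hf0] at this
  have hxnn : ∀ t, t ≤ l → 0 ≤ x t := by
    intro t
    induction t with
    | zero => intro _; rw [hx0]
    | succ t iht =>
        intro ht
        rw [(hstep t (by omega)).2]
        exact add_nonneg (iht (by omega)) (he0 _)
  set vstar : Fin n → ℝ := ∑ j, (γ : ℝ) • e (ii j) with hvstar
  have hvs0 : 0 ≤ vstar := Finset.sum_nonneg fun j _ =>
    smul_nonneg (Nat.cast_nonneg γ) (he0 (ii j))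
  have hfvs : 0 ≤ f vstar := fnn vstar hvs0
  have hq0 : (0:ℝ) ≤ 1 - β^2/l := by
    have h1 : β^2 ≤ 1 := by nlinarith
    have h2 : (1:ℝ) ≤ l := by exact_mod_cast hl
    have h3 : β^2 / l ≤ 1 := by
      rw [div_le_one hl']; linarith
    linarith
  -- per-step inequality
  have step : ∀ t, t < l → f vstar - f (x (t+1)) ≤
      (1 - β^2/(l:ℝ)) * (f vstar - f (x t))
        + (β/l) * ∑ j, (eps t (istar t) - eps t (ii j)) := by
    intro t ht
    obtain ⟨hcmp, hrec⟩ := hstep t ht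
    have hxt := hxnn t ht.le
    have hge : ∀ i : Fin m, (0:Fin n → ℝ) ≤ (γ:ℝ) • e i := fun i =>
      smul_nonneg (Nat.cast_nonneg γ) (he0 i)
    have h1 : f vstar ≤ f (x t + vstar) :=
      hmono vstar (x t + vstar) hvs0 (le_add_of_nonneg_left hxt)
    have h2 : β * (f (x t + vstar) - f (x t))
        ≤ ∑ j, (f (x t + (γ:ℝ) • e (ii j)) - f (x t)) :=
      dr_sum hDR hxt (fun j => hge (ii j))
    have h3 : ∑ j, (f (x t + (γ:ℝ) • e (ii j)) - f (x t))
        ≤ (l/γ : ℕ) * (f (x t + (γ:ℝ) • e (istar t)) - f (x t))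
          + ∑ j, (eps t (istar t) - eps t (ii j)) := by
      have hb : ∀ j : Fin (l/γ), f (x t + (γ:ℝ) • e (ii j)) - f (x t)
          ≤ (f (x t + (γ:ℝ) • e (istar t)) - f (x t))
            + (eps t (istar t) - eps t (ii j)) := by
        intro j
        have := hcmp (ii j)
        linarith
      calc ∑ j, (f (x t + (γ:ℝ) • e (ii j)) - f (x t))
          ≤ ∑ j, ((f (x t + (γ:ℝ) • e (istar t)) - f (x t))
              + (eps t (istar t) - eps t (ii j))) := Finset.sum_le_sum fun j _ => hb j
        _ = (l/γ : ℕ) * (f (x t + (γ:ℝ) • e (istar t)) - f (x t))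
              + ∑ j, (eps t (istar t) - eps t (ii j)) := by
            rw [Finset.sum_add_distrib, Finset.sum_const, Finset.card_univ,
              Fintype.card_fin, nsmul_eq_mul]
    have h4 : β * (f (x t + (γ:ℝ) • e (istar t)) - f (x t))
        ≤ (γ:ℝ) * (f (x t + e (istar t)) - f (x t)) := by
      have hd := dr_sum hDR hxt (w := fun _ : Fin γ => e (istar t)) (fun _ => he0 _)
      have hsc : (∑ _j : Fin γ, e (istar t)) = (γ:ℝ) • e (istar t) := by
        rw [Finset.sum_const, Finset.card_univ, Fintype.card_fin, Nat.cast_smul_eq_nsmul]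
      have hrs : ∑ _j : Fin γ, (f (x t + e (istar t)) - f (x t))
          = (γ:ℝ) * (f (x t + e (istar t)) - f (x t)) := by
        rw [Finset.sum_const, Finset.card_univ, Fintype.card_fin, nsmul_eq_mul]
      rw [hsc, hrs] at hd
      exact hd
    have h5 : f (x (t+1)) = f (x t + e (istar t)) := by rw [hrec]
    have hNr : ((l/γ : ℕ) : ℝ) * (γ:ℝ) = (l:ℝ) := by
      rw [← Nat.cast_mul, hNγ]
    have hNnn : (0:ℝ) ≤ ((l/γ : ℕ) : ℝ) := Nat.cast_nonneg _
    -- key polynomial inequality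
    have key : β^2 * (f vstar - f (x t)) ≤
        (l:ℝ) * (f (x (t+1)) - f (x t)) + β * ∑ j, (eps t (istar t) - eps t (ii j)) := by
      have hA : β * (f vstar - f (x t)) ≤
          ((l/γ : ℕ) : ℝ) * (f (x t + (γ:ℝ) • e (istar t)) - f (x t))
            + ∑ j, (eps t (istar t) - eps t (ii j)) := by
        have := mul_le_mul_of_nonneg_left (sub_le_sub_right h1 (f (x t))) hβ0.le
        linarith
      have hB : ((l/γ : ℕ) : ℝ) * (β * (f (x t + (γ:ℝ) • e (istar t)) - f (x t)))
          ≤ ((l/γ : ℕ) : ℝ) * ((γ:ℝ) * (f (x t + e (istar t)) - f (x t))) :=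
        mul_le_mul_of_nonneg_left h4 hNnn
      have hC := mul_le_mul_of_nonneg_left hA hβ0.le
      rw [h5]
      set A := f (x t + (γ:ℝ) • e (istar t)) - f (x t) with hAdef
      set B := f (x t + e (istar t)) - f (x t) with hBdef
      set Δ := ∑ j, (eps t (istar t) - eps t (ii j)) with hΔdef
      have hD1 : β * (((l/γ : ℕ) : ℝ) * A + Δ) = ((l/γ : ℕ) : ℝ) * (β * A) + β * Δ := by ring
      have hD2 : ((l/γ : ℕ) : ℝ) * ((γ:ℝ) * B) = (l:ℝ) * B := by
        rw [← mul_assoc, hNr]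
      calc β^2 * (f vstar - f (x t)) = β * (β * (f vstar - f (x t))) := by ring
        _ ≤ β * (((l/γ : ℕ) : ℝ) * A + Δ) := hC
        _ = ((l/γ : ℕ) : ℝ) * (β * A) + β * Δ := by ring
        _ ≤ ((l/γ : ℕ) : ℝ) * ((γ:ℝ) * B) + β * Δ := by linarith [hB]
        _ = (l:ℝ) * B + β * Δ := by rw [hD2]
    have hexp : (1 - β^2/(l:ℝ)) * (f vstar - f (x t))
        + (β/l) * (∑ j, (eps t (istar t) - eps t (ii j)))
        - (f vstar - f (x (t+1)))
        = ((l:ℝ) * (f (x (t+1)) - f (x t))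
            + β * (∑ j, (eps t (istar t) - eps t (ii j)))
            - β^2 * (f vstar - f (x t))) / l := by
      field_simp
      ring
    have hnn : (0:ℝ) ≤ ((l:ℝ) * (f (x (t+1)) - f (x t))
            + β * (∑ j, (eps t (istar t) - eps t (ii j)))
            - β^2 * (f vstar - f (x t))) / l :=
      div_nonneg (by linarith) hl'.le
    linarith [hexp ▸ hnn]
  -- recursion
  have hrecur : ∀ t, t ≤ l → f vstar - f (x t) ≤
      (1 - β^2/(l:ℝ))^t * f vstar
        + (β/l) * ∑ s ∈ Finset.range t, (1 - β^2/(l:ℝ))^(t-1-s) *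
            ∑ j, (eps s (istar s) - eps s (ii j)) := by
    intro t
    induction t with
    | zero => intro _; simp [hx0, hf0]
    | succ t iht =>
        intro ht
        have h₁ := step t (by omega)
        have h₂ := iht (by omega)
        have h₃ : (1 - β^2/(l:ℝ)) * (f vstar - f (x t))
            ≤ (1 - β^2/(l:ℝ)) * ((1 - β^2/(l:ℝ))^t * f vstar
              + (β/l) * ∑ s ∈ Finset.range t, (1 - β^2/(l:ℝ))^(t-1-s) *
                  ∑ j, (eps s (istar s) - eps s (ii j))) :=
          mul_le_mul_of_nonneg_left h₂ hq0
    -- rewrite sum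
        have hsum : ∑ s ∈ Finset.range (t+1), (1 - β^2/(l:ℝ))^(t+1-1-s) *
              ∑ j, (eps s (istar s) - eps s (ii j))
            = (1 - β^2/(l:ℝ)) * (∑ s ∈ Finset.range t, (1 - β^2/(l:ℝ))^(t-1-s) *
                ∑ j, (eps s (istar s) - eps s (ii j)))
              + ∑ j, (eps t (istar t) - eps t (ii j)) := by
          rw [Finset.sum_range_succ]
          simp only [Nat.add_sub_cancel]
          have : ∀ s ∈ Finset.range t, (1 - β^2/(l:ℝ))^(t-s) *
                ∑ j, (eps s (istar s) - eps s (ii j))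
              = (1 - β^2/(l:ℝ)) * ((1 - β^2/(l:ℝ))^(t-1-s) *
                ∑ j, (eps s (istar s) - eps s (ii j))) := by
            intro s hs
            rw [Finset.mem_range] at hs
            have he : t - s = (t - 1 - s) + 1 := by omega
            rw [he, pow_succ]
            ring
          rw [Finset.sum_congr rfl this, ← Finset.mul_sum, Nat.sub_self, pow_zero, one_mul]
        calc f vstar - f (x (t+1))
            ≤ (1 - β^2/(l:ℝ)) * (f vstar - f (x t))
              + (β/l) * ∑ j, (eps t (istar t) - eps t (ii j)) := h₁
          _ ≤ (1 - β^2/(l:ℝ)) * ((1 - β^2/(l:ℝ))^t * f vstar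
              + (β/l) * ∑ s ∈ Finset.range t, (1 - β^2/(l:ℝ))^(t-1-s) *
                  ∑ j, (eps s (istar s) - eps s (ii j)))
              + (β/l) * ∑ j, (eps t (istar t) - eps t (ii j)) := by linarith
          _ = (1 - β^2/(l:ℝ))^(t+1) * f vstar
              + (β/l) * ∑ s ∈ Finset.range (t+1), (1 - β^2/(l:ℝ))^(t+1-1-s) *
                  ∑ j, (eps s (istar s) - eps s (ii j)) := by
              rw [hsum, pow_succ]
              ring
  have hrecl := hrecur l le_rfl
  -- exponential bound
  have hpow : (1 - β^2/(l:ℝ))^l ≤ Real.exp (-β^2) := by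
    have h1 : (1 - β^2/(l:ℝ)) ≤ Real.exp (-(β^2/l)) := by
      have := Real.add_one_le_exp (-(β^2/l))
      linarith
    calc (1 - β^2/(l:ℝ))^l ≤ (Real.exp (-(β^2/l)))^l := pow_le_pow_left₀ hq0 h1 l
      _ = Real.exp (-β^2) := by
          rw [← Real.exp_nat_mul]
          congr 1
          field_simp
  have hE1 : Real.exp (-β^2) ≤ 1 := Real.exp_le_one_iff.mpr (by nlinarith)
  -- Lemma A
  have hLA : f vstar ≥ f xstar - m*D*L*γ/l := by
    classical
    have hmax_ex : ∀ y ∈ E, ∃ p, p ∈ maxFrontier E ∧ y ≤ p := by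
      intro y hy
      obtain ⟨a, haS, hamax⟩ := Set.Finite.exists_maximalFor id {z | z ∈ E ∧ y ≤ z}
        (hfin.subset (fun z hz => hz.1)) ⟨y, hy, le_rfl⟩
      refine ⟨a, ⟨haS.1, ?_⟩, haS.2⟩
      rintro ⟨z, hzE, haz, hanz⟩
      exact hanz (le_antisymm haz (hamax ⟨hzE, le_trans haS.2 haz⟩ haz))
    have hm1 : 0 < m := by
      rw [hm, Set.ncard_pos (hfin.subset (fun z hz => hz.1))]
      obtain ⟨y, hy⟩ := hne
      obtain ⟨p, hp, -⟩ := hmax_ex y hy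
      exact ⟨p, hp⟩
    have hchoice : ∀ y, y ∈ E → ∃ i : Fin m, y ≤ (l:ℝ) • e i := by
      intro y hy
      obtain ⟨p, hpF, hyp⟩ := hmax_ex y hy
      have hmem : (l:ℝ)⁻¹ • p ∈ Set.range e := by rw [herange]; exact ⟨p, hpF, rfl⟩
      obtain ⟨i, hi⟩ := hmem
      refine ⟨i, ?_⟩
      have hip : (l:ℝ) • e i = p := by
        rw [hi, smul_smul, mul_inv_cancel₀ hl'.ne', one_smul]
      rw [hip]; exact hyp
    set F : (Fin n → ℝ) → Fin m :=
      fun y => if h : y ∈ E then (hchoice y h).choose else ⟨0, hm1⟩ with hF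
    have hFle : ∀ y ∈ E, y ≤ (l:ℝ) • e (F y) := by
      intro y hy
      rw [hF]
      simp only [dif_pos hy]
      exact (hchoice y hy).choose_spec
    have hxsK : xstar ∈ convexHull ℝ (↑hfin.toFinset : Set (Fin n → ℝ)) := by
      rw [hfin.coe_toFinset]; exact hxs.1
    rw [Finset.convexHull_eq] at hxsK
    obtain ⟨w0, hw00, hw01, hw0c⟩ := hxsK
    rw [Finset.centerMass_eq_of_sum_1 _ _ hw01] at hw0c
    simp only [id_eq] at hw0c
    have hmemE : ∀ y ∈ hfin.toFinset, y ∈ E := fun y hy => (hfin.mem_toFinset).mp hy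
    set X : Fin n → ℝ := ∑ y ∈ hfin.toFinset, w0 y • ((l:ℝ) • e (F y)) with hX
    have hXK : X ∈ convexHull ℝ E := by
      apply (convex_convexHull ℝ E).sum_mem (fun y hy => hw00 y hy) hw01
      exact fun y hy => subset_convexHull ℝ E (hlei (F y)).1
    have hxle : xstar ≤ X := by
      rw [← hw0c, hX]
      apply Finset.sum_le_sum
      intro y hy
      exact smul_le_smul_of_nonneg_left (hFle y (hmemE y hy)) (hw00 y hy)
    have hXeq : X = xstar := by
      by_contra hc
      exact hxs.2 ⟨X, hXK, hxle, fun h => hc h.symm⟩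
    set lam : Fin m → ℝ :=
      fun i => ∑ y ∈ hfin.toFinset.filter (fun y => F y = i), w0 y with hlam
    have hlam0 : ∀ i, 0 ≤ lam i := by
      intro i
      apply Finset.sum_nonneg
      intro y hy
      exact hw00 y (Finset.mem_of_mem_filter y hy)
    have hlam1 : ∑ i, lam i = 1 := by
      rw [hlam]
      rw [Finset.sum_fiberwise_of_maps_to (fun y _ => Finset.mem_univ (F y)) w0]
      exact hw01
    have hlamrep : ∑ i, lam i • ((l:ℝ) • e i) = xstar := by
      rw [← hXeq, hX,
        ← Finset.sum_fiberwise_of_maps_to (fun y _ => Finset.mem_univ (F y))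
          (fun y => w0 y • ((l:ℝ) • e (F y)))]
      apply Finset.sum_congr rfl
      intro i _
      rw [hlam, Finset.sum_smul]
      apply Finset.sum_congr rfl
      intro y hy
      have hFyi : F y = i := (Finset.mem_filter.mp hy).2
      rw [hFyi]
    obtain ⟨c, hcsum, hcbd, hcsupp⟩ := round_weights (l/γ) hNpos lam hlam0 hlam1
    have hNpos' : (0:ℝ) < ((l/γ:ℕ):ℝ) := by exact_mod_cast hNpos
    have hNrR : ((l/γ:ℕ):ℝ) * (γ:ℝ) = (l:ℝ) := by exact_mod_cast hNγ
    set mu : Fin m → ℝ := fun i => (c i : ℝ)/((l/γ:ℕ):ℝ) with hmu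
    have hmu0 : ∀ i, 0 ≤ mu i := fun i => div_nonneg (Nat.cast_nonneg _) (Nat.cast_nonneg _)
    have hmu1 : ∑ i, mu i = 1 := by
      rw [hmu, ← Finset.sum_div,
        show (∑ i, (c i:ℝ)) = ((l/γ:ℕ):ℝ) from by exact_mod_cast congrArg (Nat.cast (R := ℝ)) hcsum]
      exact div_self hNpos'.ne'
    have hsupp' : ∀ i, 0 < mu i → 0 < lam i := by
      intro i hi
      apply hcsupp
      by_contra h
      push_neg at h
      have hc0 : c i = 0 := Nat.le_zero.mp h
      rw [hmu] at hi
      simp only [hc0, Nat.cast_zero, zero_div] at hi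
      exact lt_irrefl 0 hi
    set z : Fin n → ℝ := ∑ i, mu i • ((l:ℝ) • e i) with hzdef
    have hzF : z ∈ maxFrontier (convexHull ℝ E) := by
      apply frontier_transfer (fun i => (hlei i).1) hlam0 hmu0 hlam1 hmu1 hsupp'
      rw [hlamrep]; exact hxs
    have hzach : f z ≤ f vstar := by
      have hcard : Fintype.card ((i : Fin m) × Fin (c i)) = Fintype.card (Fin (l/γ)) := by
        simp only [Fintype.card_sigma, Fintype.card_fin]
        exact hcsum
      have φ : ((i : Fin m) × Fin (c i)) ≃ Fin (l/γ) := Fintype.equivOfCardEq hcard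
      set w : Fin (l/γ) → Fin m := fun j => (φ.symm j).1 with hwdef
      have hwsum : (∑ j, (γ:ℝ) • e (w j)) = z := by
        rw [← Equiv.sum_comp φ (fun j => (γ:ℝ) • e (w j))]
        have hstep1 : ∀ σ : (i : Fin m) × Fin (c i),
            (γ:ℝ) • e (w (φ σ)) = (γ:ℝ) • e σ.1 := by
          intro σ
          rw [hwdef]
          simp only [Equiv.symm_apply_apply]
        rw [Finset.sum_congr rfl (fun σ _ => hstep1 σ), ← Finset.univ_sigma_univ,
          Finset.sum_sigma, hzdef]
        apply Finset.sum_congr rfl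
        intro i _
        show (∑ _s : Fin (c i), (γ:ℝ) • e i) = mu i • ((l:ℝ) • e i)
        rw [Finset.sum_const, Finset.card_univ, Fintype.card_fin,
          ← Nat.cast_smul_eq_nsmul ℝ, smul_smul, smul_smul, hmu]
        congr 1
        show ((c i:ℝ)) * (γ:ℝ) = (c i:ℝ) / ((l/γ:ℕ):ℝ) * (l:ℝ)
        field_simp
        all_goals nlinarith [hNrR]
      rw [← hwsum]
      exact hii w
    have hdiff : z - xstar = ∑ i, (mu i - lam i) • ((l:ℝ) • e i) := by
      rw [hzdef, ← hlamrep, ← Finset.sum_sub_distrib]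
      exact Finset.sum_congr rfl fun i _ => (sub_smul _ _ _).symm
    have hbd : ∀ i : Fin m, |mu i - lam i| ≤ (γ:ℝ)/l := by
      intro i
      have hprod : |mu i - lam i| * ((l/γ:ℕ):ℝ) = |(c i:ℝ) - lam i * ((l/γ:ℕ):ℝ)| := by
        rw [← abs_of_pos hNpos', ← abs_mul]
        rw [abs_of_pos hNpos']
        congr 1
        rw [hmu]
        field_simp
      have h3 : |mu i - lam i| ≤ 1/((l/γ:ℕ):ℝ) := by
        rw [le_div_iff₀ hNpos', hprod]
        exact hcbd i
      have h4 : 1/((l/γ:ℕ):ℝ) = (γ:ℝ)/l := by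
        rw [div_eq_div_iff hNpos'.ne' hl'.ne', one_mul]
        linarith [hNrR]
      linarith
    have hnormp : ∀ i : Fin m, euclidSqrtNorm ((l:ℝ) • e i) ≤ D := fun i =>
      hDb _ (subset_convexHull ℝ E (hlei i).1)
    have hdz : euclidSqrtNorm (z - xstar) ≤ m * D * γ / l := by
      rw [hdiff]
      calc euclidSqrtNorm (∑ i, (mu i - lam i) • ((l:ℝ) • e i))
          ≤ ∑ i, euclidSqrtNorm ((mu i - lam i) • ((l:ℝ) • e i)) := euclidSqrtNorm_sum_le _
        _ = ∑ i, |mu i - lam i| * euclidSqrtNorm ((l:ℝ) • e i) :=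
            Finset.sum_congr rfl fun i _ => euclidSqrtNorm_smul' _ _
        _ ≤ ∑ _i : Fin m, ((γ:ℝ)/l) * D := Finset.sum_le_sum fun i _ =>
            mul_le_mul (hbd i) (hnormp i) (Real.sqrt_nonneg _) (by positivity)
        _ = m * D * γ / l := by
            rw [Finset.sum_const, Finset.card_univ, Fintype.card_fin, nsmul_eq_mul]
            ring
    have hLipz := hLip z hzF xstar hxs
    have hfzx : f xstar - f z ≤ L * euclidSqrtNorm (z - xstar) := by
      have habs : f xstar - f z ≤ |f z - f xstar| := by
        rw [abs_sub_comm]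
        exact le_abs_self _
      linarith
    have hLmul : L * euclidSqrtNorm (z - xstar) ≤ L * (m * D * γ / l) :=
      mul_le_mul_of_nonneg_left hdz hL
    have hring : L * (m * D * γ / l) = m*D*L*γ/l := by ring
    linarith [hzach]
  -- final assembly
  have hfin1 : (1 - β^2/(l:ℝ))^l * f vstar ≤ Real.exp (-β^2) * f vstar :=
    mul_le_mul_of_nonneg_right hpow hfvs
  have hfin2 : (1 - Real.exp (-β^2)) * (f xstar - m*D*L*γ/l)
      ≤ (1 - Real.exp (-β^2)) * f vstar :=
    mul_le_mul_of_nonneg_left hLA (by linarith)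
  have hgoal : (1 - Real.exp (-β ^ 2)) * f xstar
      - (1 - Real.exp (-β ^ 2)) * m * D * L * γ / l
      - (β / l) * ∑ t ∈ Finset.range l, (1 - β ^ 2 / l) ^ (l - 1 - t) *
          ∑ j, (eps t (istar t) - eps t (ii j))
      = (1 - Real.exp (-β^2)) * (f xstar - m*D*L*γ/l)
      - (β / l) * ∑ t ∈ Finset.range l, (1 - β ^ 2 / l) ^ (l - 1 - t) *
          ∑ j, (eps t (istar t) - eps t (ii j)) := by ring
  rw [ge_iff_le, hgoal]
  linarith [hrecl, hfin1, hfin2]
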